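/- arXiv:1607.01167 — 4 statements merged into one kernel-verified Lean document; each statement's English description precedes it below -/
import Mathlib

section
/- Let p be a complex polynomial of degree d with p(z) ≠ 0 on the open disk of radius M > 0 centered at 0, let f(z) = log p(z) be a branch of the logarithm on this disk, and let t ∈ ℂ with |t| < M. Set q = |t|/M. Then the m-th Taylor truncation T_m(f)(t) = f(0) + ∑_{j=1}^m f^{(j)}(0) t^j / j! satisfies |f(t) - T_m(f)(t)| ≤ d·q^{m+1} / ((m+1)(1-q)). -/
open Polynomial Finset
open Metric


lemma aux_prod_diff (l : List ℂ) :
    Differentiable ℂ (fun w => (l.map fun r => w - r).prod) := by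
  induction l with
  | nil => simpa using differentiable_const (1 : ℂ)
  | cons r l ih =>
    have : (fun w : ℂ => ((r :: l).map fun s => w - s).prod)
        = fun w => (w - r) * ((l.map fun s => w - s).prod) := by
      funext w; simp
    rw [this]
    exact (differentiable_id.sub (differentiable_const r)).mul ih

lemma aux_prod_ne (l : List ℂ) (z : ℂ) (h : ∀ r ∈ l, z ≠ r) :
    (l.map fun r => z - r).prod ≠ 0 := by
  induction l with
  | nil => simp
  | cons r l ih =>
    simp only [List.map_cons, List.prod_cons]
    exact mul_ne_zero (sub_ne_zero.2 (h r List.mem_cons_self))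
      (ih fun s hs => h s (List.mem_cons_of_mem _ hs))

lemma aux_logDeriv_list (a : ℂ) (ha : a ≠ 0) (l : List ℂ) (z : ℂ) (h : ∀ r ∈ l, z ≠ r) :
    logDeriv (fun w => a * (l.map fun r => w - r).prod) z
      = (l.map fun r => (z - r)⁻¹).sum := by
  induction l with
  | nil => simp [logDeriv_const]
  | cons r l ih =>
    have h1 : ∀ s ∈ l, z ≠ s := fun s hs => h s (List.mem_cons_of_mem _ hs)
    have key : (fun w => a * ((r :: l).map fun s => w - s).prod)
        = fun w => (w - r) * (a * (l.map fun s => w - s).prod) := by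
      funext w; simp; ring
    rw [key, logDeriv_mul (f := fun w : ℂ => w - r)
      (g := fun w => a * (l.map fun s => w - s).prod) z
      (sub_ne_zero.2 (h r List.mem_cons_self))
      (mul_ne_zero ha (aux_prod_ne l z h1))
      ((differentiable_id.sub (differentiable_const r)).differentiableAt)
      (((aux_prod_diff l).const_mul a).differentiableAt)]
    rw [ih h1]
    have : logDeriv (fun w : ℂ => w - r) z = (z - r)⁻¹ := by
      rw [logDeriv_apply]
      rw [deriv_sub_const]
      simp [one_div]
    rw [this]
    simp

lemma aux_itd_zero_fun (k : ℕ) : iteratedDeriv k (fun _ : ℂ => (0 : ℂ)) = fun _ => 0 := by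
  rw [iteratedDeriv_eq_iterate]
  exact Function.iterate_fixed (by funext x; simp) k

lemma aux_bridge {M : ℝ} (hM : 0 < M) (k : ℕ) (g : ℂ → ℂ) :
    iteratedDerivWithin k g (ball (0 : ℂ) M) 0 = iteratedDeriv k g 0 := by
  rw [iteratedDerivWithin_eq_iteratedFDerivWithin, iteratedDeriv_eq_iteratedFDeriv]
  rw [iteratedFDerivWithin_of_isOpen k isOpen_ball (by simpa using hM)]

lemma aux_cdo {M : ℝ} (k : ℕ) {r : ℂ} (hr : M ≤ ‖r‖) :
    ContDiffOn ℂ k (fun z => (z - r)⁻¹) (ball (0 : ℂ) M) := by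
  apply ContDiffOn.inv
  · exact (contDiff_id.sub contDiff_const).contDiffOn
  · intro z hz
    rw [mem_ball, dist_zero_right] at hz
    exact sub_ne_zero.2 fun hzr => absurd (hzr ▸ hr) (not_le.2 hz)

lemma aux_cdo_sum {M : ℝ} (k : ℕ) (l : List ℂ) (hl : ∀ r ∈ l, M ≤ ‖r‖) :
    ContDiffOn ℂ k (fun z => (l.map fun r => (z - r)⁻¹).sum) (ball (0 : ℂ) M) := by
  induction l with
  | nil => simpa using contDiffOn_const
  | cons r l ih =>
    have : (fun z : ℂ => ((r :: l).map fun s => (z - s)⁻¹).sum)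
        = fun z => (z - r)⁻¹ + (l.map fun s => (z - s)⁻¹).sum := by
      funext z; simp
    rw [this]
    exact (aux_cdo k (hl r List.mem_cons_self)).add
      (ih fun s hs => hl s (List.mem_cons_of_mem _ hs))

lemma aux_itd_sum {M : ℝ} (hM : 0 < M) (k : ℕ) (l : List ℂ) (hl : ∀ r ∈ l, M ≤ ‖r‖) :
    iteratedDeriv k (fun z => (l.map fun r => (z - r)⁻¹).sum) 0
      = (l.map fun r => iteratedDeriv k (fun z => (z - r)⁻¹) 0).sum := by
  induction l with
  | nil => simpa using congrFun (aux_itd_zero_fun k) 0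
  | cons r l ih =>
    have hl' : ∀ s ∈ l, M ≤ ‖s‖ := fun s hs => hl s (List.mem_cons_of_mem _ hs)
    have key : (fun z : ℂ => ((r :: l).map fun s => (z - s)⁻¹).sum)
        = (fun z => (z - r)⁻¹) + (fun z => (l.map fun s => (z - s)⁻¹).sum) := by
      funext z; simp
    rw [key, ← aux_bridge hM k, iteratedDerivWithin_add (mem_ball_self hM)
      isOpen_ball.uniqueDiffOn (aux_cdo k (hl r List.mem_cons_self) 0 (mem_ball_self hM))
      (aux_cdo_sum k l hl' 0 (mem_ball_self hM)),
      aux_bridge hM k, aux_bridge hM k, ih hl']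
    simp

lemma aux_itd_single (k : ℕ) (r : ℂ) :
    iteratedDeriv k (fun z => (z - r)⁻¹) 0
      = (∏ i ∈ Finset.range k, (-1 - i : ℂ)) * (-r) ^ (-1 - k : ℤ) := by
  have : (fun z : ℂ => (z - r)⁻¹) = fun z => (z + (-r))⁻¹ := by
    funext z; rw [sub_eq_add_neg]
  rw [this]
  have h := congrFun (iteratedDeriv_comp_add_const k (Inv.inv : ℂ → ℂ) (-r)) 0
  rw [show (fun z : ℂ => (z + -r)⁻¹) = (fun z : ℂ => (Inv.inv) (z + -r)) from rfl, h,
    zero_add, iteratedDeriv_eq_iterate]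
  have h2 : (Inv.inv : ℂ → ℂ) = fun y : ℂ => y ^ (-1 : ℤ) := by funext y; simp
  rw [h2, iter_deriv_zpow]
  push_cast
  rfl

lemma aux_itd_single_norm {M : ℝ} (hM : 0 < M) (k : ℕ) {r : ℂ} (hr : M ≤ ‖r‖) :
    ‖iteratedDeriv k (fun z => (z - r)⁻¹) 0‖ ≤ (k : ℕ).factorial / M ^ (k + 1) := by
  rw [aux_itd_single, norm_mul]
  have h1 : ‖∏ i ∈ Finset.range k, (-1 - i : ℂ)‖ = (k.factorial : ℝ) := by
    rw [norm_prod]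
    have : ∀ i ∈ Finset.range k, ‖-1 - (i : ℂ)‖ = ((i : ℝ) + 1) := by
      intro i _
      have : (-1 - (i : ℂ)) = -((i : ℂ) + 1) := by ring
      rw [this, norm_neg]
      have : ((i : ℂ) + 1) = ((i + 1 : ℕ) : ℂ) := by push_cast; ring
      rw [this, Complex.norm_natCast]
      push_cast; ring
    rw [Finset.prod_congr rfl this]
    exact_mod_cast Finset.prod_range_add_one_eq_factorial k
  rw [h1]
  have hr0 : (0 : ℝ) < ‖r‖ := lt_of_lt_of_le hM hr
  have h2 : ‖(-r) ^ (-1 - k : ℤ)‖ = (‖r‖ ^ (k + 1))⁻¹ := by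
    rw [norm_zpow, norm_neg]
    rw [show (-1 - k : ℤ) = -(k + 1 : ℕ) by push_cast; ring]
    rw [zpow_neg, zpow_natCast]
  rw [h2, div_eq_mul_inv]
  have h3 : (‖r‖ ^ (k + 1))⁻¹ ≤ (M ^ (k + 1))⁻¹ := by
    apply inv_anti₀ (pow_pos hM _)
    exact pow_le_pow_left₀ hM.le hr _
  have : (0 : ℝ) ≤ (k.factorial : ℝ) := Nat.cast_nonneg _
  exact mul_le_mul_of_nonneg_left h3 this

lemma aux_list_abs_sum (l : List ℂ) (g : ℂ → ℂ) (C : ℝ)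
    (hC : ∀ r ∈ l, ‖g r‖ ≤ C) :
    ‖(l.map g).sum‖ ≤ l.length * C := by
  induction l with
  | nil => simp
  | cons r l ih =>
    simp only [List.map_cons, List.sum_cons, List.length_cons]
    calc ‖g r + (l.map g).sum‖
        ≤ ‖g r‖ + ‖(l.map g).sum‖ := norm_add_le _ _
      _ ≤ C + l.length * C := add_le_add (hC r List.mem_cons_self)
          (ih fun s hs => hC s (List.mem_cons_of_mem _ hs))
      _ = (l.length + 1) * C := by ring
      _ = ((l.length + 1 : ℕ) : ℝ) * C := by push_cast; ring

/-- Quality of the Taylor truncation of `f = log p`: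
if `p` is a degree-`d` polynomial nonvanishing on the open disk of radius `M > 0`,
`f` is an analytic branch of `log p` on this disk, `|t| < M` and `q = |t|/M`, then
`|f(t) - T_m(f)(t)| ≤ d·q^{m+1} / ((m+1)(1-q))`, where `T_m(f)` is the degree-`m`
Taylor polynomial of `f` at `0`. -/
theorem log_taylor_truncation_bound
    (p : Polynomial ℂ) (d : ℕ) (hd : p.natDegree = d)
    (M : ℝ) (hM : 0 < M)
    (hnz : ∀ z ∈ Metric.ball (0 : ℂ) M, p.eval z ≠ 0)
    (f : ℂ → ℂ) (hf : AnalyticOn ℂ f (Metric.ball (0 : ℂ) M))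
    (hlog : ∀ z ∈ Metric.ball (0 : ℂ) M, Complex.exp (f z) = p.eval z)
    (t : ℂ) (ht : ‖t‖ < M) (q : ℝ) (hq : q = ‖t‖ / M)
    (m : ℕ) :
    ‖f t - ∑ j ∈ Finset.range (m + 1),
        (iteratedDeriv j f 0) * t ^ j / (Nat.factorial j)‖ ≤
      d * q ^ (m + 1) / ((m + 1) * (1 - q)) := by
  have hB : IsOpen (ball (0:ℂ) M) := isOpen_ball
  have h0B : (0:ℂ) ∈ ball (0:ℂ) M := by simpa using hM
  have hp0 : p ≠ 0 := by
    intro h; exact hnz 0 h0B (by simp [h])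
  have hlead : p.leadingCoeff ≠ 0 := Polynomial.leadingCoeff_ne_zero.2 hp0
  set l : List ℂ := p.roots.toList with hl_def
  have hl : ∀ r ∈ l, M ≤ ‖r‖ := by
    intro r hr
    have hr' : r ∈ p.roots := by rwa [Multiset.mem_toList] at hr
    by_contra hcon
    push_neg at hcon
    exact hnz r (by simpa [mem_ball, dist_zero_right] using hcon)
      (Polynomial.isRoot_of_mem_roots hr')
  have hlen : (l.length : ℕ) ≤ d := by
    rw [hl_def, Multiset.length_toList, ← hd]
    exact Polynomial.card_roots' p
  have hfact : ∀ z : ℂ, p.eval z = p.leadingCoeff * (l.map fun r => z - r).prod := by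
    intro z
    conv_lhs => rw [(IsAlgClosed.splits p).eq_prod_roots]
    rw [Polynomial.eval_mul, Polynomial.eval_C, Polynomial.eval_multiset_prod]
    congr 1
    simp only [Multiset.map_map, Function.comp, Polynomial.eval_sub, Polynomial.eval_X,
      Polynomial.eval_C]
    rw [← Multiset.coe_toList p.roots, Multiset.map_coe, Multiset.prod_coe]
  have hfd : ∀ z ∈ ball (0:ℂ) M, DifferentiableAt ℂ f z := fun z hz =>
    ((hf z hz).differentiableWithinAt).differentiableAt
      (Filter.mem_of_superset (hB.mem_nhds hz) (Set.subset_insert _ _))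
  have hderiv : ∀ z ∈ ball (0:ℂ) M, deriv f z = (l.map fun r => (z - r)⁻¹).sum := by
    intro z hz
    have hzM : ‖z‖ < M := by simpa [mem_ball, dist_zero_right] using hz
    have hzr : ∀ r ∈ l, z ≠ r := by
      intro r hr heq
      exact absurd (heq ▸ hl r hr) (not_le.2 hzM)
    have h1 : HasDerivAt (fun w => Complex.exp (f w)) (Complex.exp (f z) * deriv f z) z :=
      (hfd z hz).hasDerivAt.cexp
    have h2 : (fun w => Complex.exp (f w)) =ᶠ[nhds z] (fun w => p.eval w) := by
      filter_upwards [hB.mem_nhds hz] with w hw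
      exact hlog w hw
    have h3 : HasDerivAt (fun w => p.eval w) (Complex.exp (f z) * deriv f z) z :=
      h1.congr_of_eventuallyEq h2.symm
    have h4 : deriv (fun w => p.eval w) z = Complex.exp (f z) * deriv f z := h3.deriv
    have h5 : logDeriv (fun w => p.eval w) z = deriv f z := by
      rw [logDeriv_apply, h4, hlog z hz]
      exact mul_div_cancel_left₀ _ (hnz z hz)
    rw [← h5]
    have heqf : (fun w => p.eval w) = fun w => p.leadingCoeff * (l.map fun r => w - r).prod :=
      funext hfact
    rw [heqf]
    exact aux_logDeriv_list _ hlead l z hzr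
  have hitd : ∀ k : ℕ,
      ‖iteratedDeriv (k+1) f 0‖ ≤ d * k.factorial / M ^ (k+1) := by
    intro k
    have heq : deriv f =ᶠ[nhds 0] (fun z => (l.map fun r => (z - r)⁻¹).sum) := by
      filter_upwards [hB.mem_nhds h0B] with w hw
      exact hderiv w hw
    rw [iteratedDeriv_succ', Filter.EventuallyEq.iteratedDeriv_eq k heq,
      aux_itd_sum hM k l hl]
    calc ‖(l.map fun r => iteratedDeriv k (fun z => (z - r)⁻¹) 0).sum‖
        ≤ l.length * (k.factorial / M ^ (k+1)) :=
          aux_list_abs_sum l _ _ (fun r hr => aux_itd_single_norm hM k (hl r hr))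
      _ ≤ d * (k.factorial / M ^ (k+1)) := by
          apply mul_le_mul_of_nonneg_right _ (by positivity)
          exact_mod_cast hlen
      _ = d * k.factorial / M ^ (k+1) := by ring
  -- power series of f on a slightly smaller ball
  set a : ℕ → ℂ := fun n => iteratedDeriv n f 0 * t ^ n / (Nat.factorial n) with ha_def
  set r0 : ℝ := (‖t‖ + M) / 2 with hr0_def
  have htr : ‖t‖ < r0 := by rw [hr0_def]; linarith
  have hrM : r0 < M := by rw [hr0_def]; linarith
  have hr0 : 0 < r0 := lt_of_le_of_lt (norm_nonneg t) htr
  set R : NNReal := ⟨r0, hr0.le⟩ with hR_def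
  have hRpos : 0 < R := hr0
  have hdiff : DifferentiableOn ℂ f (closedBall (0:ℂ) R) := by
    intro z hz
    have hz' : z ∈ ball (0:ℂ) M := by
      rw [mem_closedBall, dist_zero_right] at hz
      rw [mem_ball, dist_zero_right]
      exact lt_of_le_of_lt hz hrM
    exact (hfd z hz').differentiableWithinAt
  have hps := hdiff.hasFPowerSeriesOnBall hRpos
  have htmem : t ∈ Metric.eball (0:ℂ) R := by
    rw [Metric.mem_eball, edist_dist, dist_zero_right]
    rw [show ((R : NNReal) : ENNReal) = ENNReal.ofReal r0 from
      (ENNReal.ofReal_eq_coe_nnreal hr0.le).symm]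
    exact (ENNReal.ofReal_lt_ofReal_iff hr0).2 htr
  have hc : ∀ n : ℕ, ((Nat.factorial n : ℂ)) * (cauchyPowerSeries f 0 R).coeff n
      = iteratedDeriv n f 0 := by
    intro n
    have h := hps.factorial_smul (1:ℂ) n
    rw [FormalMultilinearSeries.apply_eq_pow_smul_coeff, one_pow, one_smul] at h
    rw [iteratedDeriv_eq_iteratedFDeriv, ← h, nsmul_eq_mul]
  have hPt : ∀ n : ℕ, (cauchyPowerSeries f 0 R) n (fun _ => t) = a n := by
    intro n
    rw [FormalMultilinearSeries.apply_eq_pow_smul_coeff, smul_eq_mul, ha_def]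
    have hfne : ((Nat.factorial n : ℂ)) ≠ 0 :=
      Nat.cast_ne_zero.2 (Nat.factorial_ne_zero n)
    field_simp [← hc n]
    rw [← hc n]; ring
  have hsum : HasSum a (f t) := by
    have h := hps.hasSum htmem
    rw [zero_add] at h
    have heq : (fun n => (cauchyPowerSeries f 0 R) n (fun _ => t)) = a := funext hPt
    rwa [heq] at h
  have hq0 : 0 ≤ q := by rw [hq]; positivity
  have hq1 : q < 1 := by rw [hq]; exact (div_lt_one hM).2 ht
  have hsplit : f t - ∑ j ∈ Finset.range (m + 1), a j = ∑' i, a (i + (m + 1)) := by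
    have h := hsum.summable.sum_add_tsum_nat_add (m + 1)
    rw [hsum.tsum_eq] at h
    linear_combination -h
  have hterm : ∀ i : ℕ, ‖a (i + (m + 1))‖ ≤ (d * q ^ (m + 1) / (m + 1)) * q ^ i := by
    intro i
    have h1 : ‖a (i + (m + 1))‖ = ‖iteratedDeriv (i + (m + 1)) f 0‖
        * (‖t‖) ^ (i + (m + 1)) / (Nat.factorial (i + (m + 1))) := by
      rw [ha_def]
      simp [norm_div, norm_mul, norm_pow, Complex.norm_natCast]
    rw [h1]
    have h2 : ‖iteratedDeriv (i + (m + 1)) f 0‖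
        ≤ d * (i + m).factorial / M ^ (i + m + 1) := hitd (i + m)
    have hfac : (Nat.factorial (i + (m + 1)) : ℝ)
        = (i + m + 1) * (Nat.factorial (i + m)) := by
      rw [show i + (m + 1) = (i + m) + 1 from rfl, Nat.factorial_succ]
      push_cast; ring
    calc ‖iteratedDeriv (i + (m + 1)) f 0‖
          * (‖t‖) ^ (i + (m + 1)) / (Nat.factorial (i + (m + 1)))
        ≤ (d * (i + m).factorial / M ^ (i + m + 1))
          * (‖t‖) ^ (i + (m + 1)) / (Nat.factorial (i + (m + 1))) := by
          gcongr
      _ = d * q ^ (i + (m + 1)) / (i + m + 1) := by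
          rw [hq, div_pow, hfac]
          rw [show i + (m + 1) = (i + m) + 1 from rfl]
          have hMn : (M : ℝ) ^ (i + m + 1) ≠ 0 := by positivity
          have hfn : ((i + m).factorial : ℝ) ≠ 0 := by
            exact_mod_cast (Nat.factorial_pos _).ne'
          have him : ((i : ℝ) + m + 1) ≠ 0 := by positivity
          field_simp
      _ ≤ d * q ^ (i + (m + 1)) / (m + 1) := by
          apply div_le_div_of_nonneg_left (by positivity) (by positivity)
          push_cast; linarith
      _ = (d * q ^ (m + 1) / (m + 1)) * q ^ i := by
          rw [pow_add]
          ring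
  have hgeo : HasSum (fun i => (d * q ^ (m + 1) / (m + 1)) * q ^ i)
      ((d * q ^ (m + 1) / (m + 1)) * (1 - q)⁻¹) :=
    (hasSum_geometric_of_lt_one hq0 hq1).mul_left _
  have hbound : ‖∑' i, a (i + (m + 1))‖
      ≤ (d * q ^ (m + 1) / (m + 1)) * (1 - q)⁻¹ :=
    tsum_of_norm_bounded hgeo hterm
  have hfin : (d : ℝ) * q ^ (m + 1) / (m + 1) * (1 - q)⁻¹
      = d * q ^ (m + 1) / ((m + 1) * (1 - q)) := by
    rw [div_eq_mul_inv, div_eq_mul_inv, mul_inv]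
    ring
  rw [show (∑ j ∈ Finset.range (m + 1),
      (iteratedDeriv j f 0) * t ^ j / (Nat.factorial j)) = ∑ j ∈ Finset.range (m + 1), a j
    from rfl, hsplit]
  calc ‖∑' i, a (i + (m + 1))‖ ≤ (d * q ^ (m + 1) / (m + 1)) * (1 - q)⁻¹ := hbound
    _ = d * q ^ (m + 1) / ((m + 1) * (1 - q)) := hfin
end

section
/- Let f be a graph invariant of the form f(G) = ∑_H a_H · ind(H, G) (a finite-support linear combination over isomorphism classes of finite graphs). Then f is additive (i.e. f(G₁ ⊔ G₂) = f(G₁) + f(G₂) for all G₁, G₂) if and only if a_H = 0 for every disconnected graph H. -/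
open Finset

/-- `indCount H G` is the number of vertex subsets `S` of `G` such that the induced
subgraph `G[S]` is isomorphic to `H`. -/
noncomputable def indCount {α β : Type} [Fintype α] [Fintype β]
    (H : SimpleGraph α) (G : SimpleGraph β) : ℕ :=
  Nat.card {S : Finset β // Nonempty ((G.induce (S : Set β)) ≃g H)}

/-- The graph invariant `G ↦ ∑_H a_H · ind(H, G)`, where the (finitely many) graphs
`H` range over a finite set `s` of representatives and `a` gives the coefficients. -/
noncomputable def fval (s : Finset (Σ n : ℕ, SimpleGraph (Fin n)))
    (a : (Σ n : ℕ, SimpleGraph (Fin n)) → ℂ)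
    {β : Type} [Fintype β] (G : SimpleGraph β) : ℂ :=
  ∑ H ∈ s, a H * indCount H.2 G

set_option linter.all false

namespace FvalAux
open SimpleGraph

variable {α β γ : Type} [Fintype α] [Fintype β] [Fintype γ]

/-- Any two graphs on empty vertex types are isomorphic. -/
def isoOfIsEmpty {α' β' : Type*} [IsEmpty α'] [IsEmpty β'] (G : SimpleGraph α')
    (H : SimpleGraph β') : G ≃g H :=
  ⟨Equiv.equivOfIsEmpty _ _, fun {a} => isEmptyElim a⟩

/-- Transport of induced subgraphs along a graph embedding. -/
noncomputable def induceMapIso {G : SimpleGraph β} {G' : SimpleGraph γ} (f : G ↪g G')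
    (S : Finset β) :
    G.induce (S : Set β) ≃g G'.induce ((S.map f.toEmbedding : Finset γ) : Set γ) := by
  refine ⟨Equiv.ofBijective (fun x => ⟨f x.1, by simpa using ⟨x.1, by simpa using x.2, rfl⟩⟩)
    ⟨fun x y hxy => ?_, fun y => ?_⟩, ?_⟩
  · exact Subtype.ext (f.injective (by simpa using hxy))
  · obtain ⟨x, hx, hfx⟩ := by simpa using y.2
    exact ⟨⟨x, by simpa using hx⟩, Subtype.ext hfx⟩
  · intro x y
    exact f.map_adj_iff

lemma nonempty_induce_map_iff {H : SimpleGraph α} {G : SimpleGraph β} {G' : SimpleGraph γ}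
    (f : G ↪g G') (S : Finset β) :
    Nonempty (G'.induce ((S.map f.toEmbedding : Finset γ) : Set γ) ≃g H) ↔
      Nonempty (G.induce (S : Set β) ≃g H) :=
  ⟨fun ⟨ψ⟩ => ⟨(induceMapIso f S).trans ψ⟩, fun ⟨ψ⟩ => ⟨(induceMapIso f S).symm.trans ψ⟩⟩

lemma indCount_congr (H : SimpleGraph α) {G : SimpleGraph β} {G' : SimpleGraph γ}
    (φ : G ≃g G') : indCount H G = indCount H G' := by
  apply Nat.card_congr
  refine Equiv.subtypeEquiv φ.toEquiv.finsetCongr fun S => ?_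
  rw [Equiv.finsetCongr_apply]
  exact (nonempty_induce_map_iff (H := H) φ.toEmbedding S).symm

lemma card_eq_of_iso {H : SimpleGraph α} {G : SimpleGraph β} {S : Finset β}
    (ψ : G.induce (S : Set β) ≃g H) : S.card = Fintype.card α := by
  have := Fintype.card_congr ψ.toEquiv
  simpa using this

lemma indCount_of_isEmpty [IsEmpty α] (H : SimpleGraph α) (G : SimpleGraph β) :
    indCount H G = 1 := by
  rw [indCount, Nat.card_eq_one_iff_unique]
  haveI : IsEmpty ((↑(∅ : Finset β)) : Set β) := ⟨fun x => by simpa using x.2⟩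
  refine ⟨⟨?_⟩, ⟨⟨∅, ⟨isoOfIsEmpty _ _⟩⟩⟩⟩
  rintro ⟨S, ⟨ψ⟩⟩ ⟨T, ⟨ψ'⟩⟩
  have hS : S = ∅ := Finset.card_eq_zero.mp (by simpa [Fintype.card_eq_zero] using card_eq_of_iso ψ)
  have hT : T = ∅ := Finset.card_eq_zero.mp (by simpa [Fintype.card_eq_zero] using card_eq_of_iso ψ')
  exact Subtype.ext (hS.trans hT.symm)

lemma indCount_of_lt (H : SimpleGraph α) (G : SimpleGraph β)
    (h : Fintype.card β < Fintype.card α) : indCount H G = 0 := by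
  haveI : IsEmpty {S : Finset β // Nonempty ((G.induce (S : Set β)) ≃g H)} := by
    refine ⟨?_⟩
    rintro ⟨S, ⟨ψ⟩⟩
    have h1 := card_eq_of_iso ψ
    have h2 : S.card ≤ Fintype.card β := by
      simpa using Finset.card_le_univ S
    omega
  exact Nat.card_of_isEmpty

noncomputable def induce_univ_iso (G : SimpleGraph β) :
    G.induce ((↑(Finset.univ : Finset β)) : Set β) ≃g G := by
  rw [Finset.coe_univ]; exact G.induceUnivIso

open scoped Classical in
lemma indCount_of_card_eq (H : SimpleGraph α) (G : SimpleGraph β)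
    (h : Fintype.card α = Fintype.card β) :
    indCount H G = if Nonempty (G ≃g H) then 1 else 0 := by
  have huniv : ∀ (S : Finset β), Nonempty ((G.induce (S : Set β)) ≃g H) →
      S = Finset.univ := by
    intro S ⟨ψ⟩
    apply Finset.eq_univ_of_card
    rw [card_eq_of_iso ψ, h]
  split_ifs with hiso
  · rw [indCount, Nat.card_eq_one_iff_unique]
    constructor
    · refine ⟨?_⟩
      rintro ⟨S, hS⟩ ⟨T, hT⟩
      exact Subtype.ext ((huniv S hS).trans (huniv T hT).symm)
    · exact ⟨⟨Finset.univ, ⟨(induce_univ_iso G).trans hiso.some⟩⟩⟩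
  · rw [indCount]
    haveI : IsEmpty {S : Finset β // Nonempty ((G.induce (S : Set β)) ≃g H)} := by
      refine ⟨?_⟩
      rintro ⟨S, ⟨ψ⟩⟩
      exact hiso ⟨((induce_univ_iso G).symm.trans (huniv S ⟨ψ⟩ ▸ ψ))⟩
    exact Nat.card_of_isEmpty

omit [Fintype β] [Fintype γ] in
lemma reachable_side {G₁ : SimpleGraph β} {G₂ : SimpleGraph γ} {u v : β ⊕ γ}
    (h : (G₁ ⊕g G₂).Reachable u v) : u.isLeft = v.isLeft := by
  obtain ⟨w⟩ := h
  induction w with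
  | nil => rfl
  | cons hadj w ih =>
    rename_i x y z
    have : x.isLeft = y.isLeft := by
      cases x <;> cases y <;> simp_all [SimpleGraph.sum_adj]
    exact this.trans ih

/-- The canonical embedding Finset β → Finset (β ⊕ γ) as left. -/
def inlFinset (S : Finset β) : Finset (β ⊕ γ) := S.map ⟨Sum.inl, Sum.inl_injective⟩

def inrFinset (S : Finset γ) : Finset (β ⊕ γ) := S.map ⟨Sum.inr, Sum.inr_injective⟩

omit [Fintype β] [Fintype γ] in
lemma side_of_connected {H : SimpleGraph α} (hH : H.Connected) {G₁ : SimpleGraph β}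
    {G₂ : SimpleGraph γ} {S : Finset (β ⊕ γ)}
    (ψ : ((G₁ ⊕g G₂).induce (S : Set (β ⊕ γ))) ≃g H) :
    (∃ S₁ : Finset β, S = inlFinset S₁) ∨ (∃ S₂ : Finset γ, S = inrFinset S₂) := by
  classical
  have hconn : ((G₁ ⊕g G₂).induce (S : Set (β ⊕ γ))).Connected := ψ.connected_iff.mpr hH
  obtain ⟨⟨x, hx⟩⟩ := hconn.nonempty
  have hside : ∀ y ∈ S, (y : β ⊕ γ).isLeft = x.isLeft := by
    intro y hy
    have hr := hconn.preconnected ⟨y, hy⟩ ⟨x, hx⟩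
    have hr' : (G₁ ⊕g G₂).Reachable y x :=
      hr.map (SimpleGraph.Embedding.induce (S : Set (β ⊕ γ))).toHom
    exact reachable_side hr'
  cases x with
  | inl a =>
    left
    refine ⟨S.toLeft, ?_⟩
    ext z
    simp only [inlFinset, Finset.mem_map, Finset.mem_toLeft, Function.Embedding.coeFn_mk]
    constructor
    · intro hz
      have := hside z hz
      cases z with
      | inl b => exact ⟨b, hz, rfl⟩
      | inr b => simp at this
    · rintro ⟨b, hb, rfl⟩; exact hb
  | inr a =>
    right
    refine ⟨S.toRight, ?_⟩
    ext z
    simp only [inrFinset, Finset.mem_map, Finset.mem_toRight, Function.Embedding.coeFn_mk]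
    constructor
    · intro hz
      have := hside z hz
      cases z with
      | inl b => simp at this
      | inr b => exact ⟨b, hz, rfl⟩
    · rintro ⟨b, hb, rfl⟩; exact hb

omit [Fintype β] [Fintype γ] in
lemma inlFinset_eq {G₁ : SimpleGraph β} {G₂ : SimpleGraph γ} (S : Finset β) :
    S.map (Embedding.sumInl (G := G₁) (H := G₂)).toEmbedding = inlFinset S := by
  ext z; simp [inlFinset]

omit [Fintype β] [Fintype γ] in
lemma inrFinset_eq {G₁ : SimpleGraph β} {G₂ : SimpleGraph γ} (S : Finset γ) :
    S.map (Embedding.sumInr (G := G₁) (H := G₂)).toEmbedding = inrFinset S := by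
  ext z; simp [inrFinset]

lemma indCount_sum {H : SimpleGraph α} (hH : H.Connected) (G₁ : SimpleGraph β)
    (G₂ : SimpleGraph γ) :
    indCount H (G₁ ⊕g G₂) = indCount H G₁ + indCount H G₂ := by
  classical
  rw [indCount, indCount, indCount, ← Nat.card_sum]
  apply Nat.card_congr
  have hcard : 0 < Fintype.card α := Fintype.card_pos_iff.mpr hH.nonempty
  refine (Equiv.ofBijective (fun x : {S₁ : Finset β // Nonempty ((G₁.induce (S₁ : Set β)) ≃g H)} ⊕
      {S₂ : Finset γ // Nonempty ((G₂.induce (S₂ : Set γ)) ≃g H)} =>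
      (match x with
      | .inl S₁ => ⟨inlFinset S₁.1, by
          rw [← inlFinset_eq (G₁ := G₁) (G₂ := G₂)]
          exact (nonempty_induce_map_iff Embedding.sumInl S₁.1).mpr S₁.2⟩
      | .inr S₂ => ⟨inrFinset S₂.1, by
          rw [← inrFinset_eq (G₁ := G₁) (G₂ := G₂)]
          exact (nonempty_induce_map_iff Embedding.sumInr S₂.1).mpr S₂.2⟩ :
        {S : Finset (β ⊕ γ) // Nonempty (((G₁ ⊕g G₂).induce (S : Set (β ⊕ γ))) ≃g H)}))
    ⟨?_, ?_⟩).symm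
  · rintro (⟨S₁, h₁⟩ | ⟨S₂, h₂⟩) (⟨T₁, g₁⟩ | ⟨T₂, g₂⟩) h <;>
      simp only [Subtype.mk.injEq] at h
    · exact congrArg Sum.inl (Subtype.ext (Finset.map_injective _ h))
    · exfalso
      obtain ⟨ψ⟩ := h₁
      have : S₁.Nonempty := by
        rw [← Finset.card_pos, card_eq_of_iso ψ]; exact hcard
      obtain ⟨b, hb⟩ := this
      have : Sum.inl b ∈ (inrFinset T₂ : Finset (β ⊕ γ)) := by
        rw [← h]; simp [inlFinset, hb]
      simp [inrFinset] at this
    · exfalso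
      obtain ⟨ψ⟩ := h₂
      have : S₂.Nonempty := by
        rw [← Finset.card_pos, card_eq_of_iso ψ]; exact hcard
      obtain ⟨b, hb⟩ := this
      have : Sum.inr b ∈ (inlFinset T₁ : Finset (β ⊕ γ)) := by
        rw [← h]; simp [inrFinset, hb]
      simp [inlFinset] at this
    · exact congrArg Sum.inr (Subtype.ext (Finset.map_injective _ h))
  · rintro ⟨S, ⟨ψ⟩⟩
    rcases side_of_connected hH ψ with ⟨S₁, rfl⟩ | ⟨S₂, rfl⟩
    · refine ⟨.inl ⟨S₁, ?_⟩, rfl⟩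
      refine (nonempty_induce_map_iff (Embedding.sumInl (G := G₁) (H := G₂)) S₁).mp ?_
      rw [inlFinset_eq (G₁ := G₁) (G₂ := G₂)]
      exact ⟨ψ⟩
    · refine ⟨.inr ⟨S₂, ?_⟩, rfl⟩
      refine (nonempty_induce_map_iff (Embedding.sumInr (G := G₁) (H := G₂)) S₂).mp ?_
      rw [inrFinset_eq (G₁ := G₁) (G₂ := G₂)]
      exact ⟨ψ⟩

lemma decomp {n : ℕ} (G : SimpleGraph (Fin n)) (hn : 0 < n) (hG : ¬ G.Connected) :
    ∃ (m₁ m₂ : ℕ) (G₁ : SimpleGraph (Fin m₁)) (G₂ : SimpleGraph (Fin m₂)),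
      0 < m₁ ∧ 0 < m₂ ∧ m₁ + m₂ = n ∧ Nonempty (G₁ ⊕g G₂ ≃g G) := by
  classical
  haveI : Nonempty (Fin n) := ⟨⟨0, hn⟩⟩
  have hpre : ¬ G.Preconnected := fun h => hG ⟨h⟩
  rw [SimpleGraph.Preconnected] at hpre
  push_neg at hpre
  obtain ⟨x, y, hxy⟩ := hpre
  set p : Fin n → Prop := fun w => G.Reachable x w with hp
  have hpx : p x := SimpleGraph.Reachable.refl x
  have hpy : ¬ p y := hxy
  have hclosed : ∀ {u v : Fin n}, p u → G.Adj u v → p v :=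
    fun hu huv => hu.trans huv.reachable
  set A := {w // p w}
  set B := {w // ¬ p w}
  haveI : Nonempty A := ⟨⟨x, hpx⟩⟩
  haveI : Nonempty B := ⟨⟨y, hpy⟩⟩
  set e₁ : Fin (Nat.card A) ≃ A := (Finite.equivFin A).symm with he₁
  set e₂ : Fin (Nat.card B) ≃ B := (Finite.equivFin B).symm with he₂
  set e : Fin (Nat.card A) ⊕ Fin (Nat.card B) ≃ Fin n :=
    (e₁.sumCongr e₂).trans (Equiv.sumCompl p) with he
  refine ⟨Nat.card A, Nat.card B,
    (G.comap (Subtype.val : A → Fin n)).comap e₁,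
    (G.comap (Subtype.val : B → Fin n)).comap e₂,
    Nat.card_pos, Nat.card_pos, ?_, ⟨⟨e, ?_⟩⟩⟩
  · have := Nat.card_congr (Equiv.sumCompl p)
    rw [Nat.card_sum] at this
    rwa [Nat.card_eq_fintype_card (α := Fin n), Fintype.card_fin] at this
  · intro u v
    cases u with
    | inl i =>
      cases v with
      | inl j => exact Iff.rfl
      | inr j =>
        simp only [he, SimpleGraph.sum_adj, SimpleGraph.comap_adj, Equiv.trans_apply,
          Equiv.sumCongr_apply, Sum.map_inl, Sum.map_inr, Equiv.sumCompl_apply_inl,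
          Equiv.sumCompl_apply_inr]
        constructor
        · intro h; exact ((e₂ j).2 (hclosed (e₁ i).2 h)).elim
        · intro h; exact h.elim
    | inr i =>
      cases v with
      | inl j =>
        simp only [he, SimpleGraph.sum_adj, SimpleGraph.comap_adj, Equiv.trans_apply,
          Equiv.sumCongr_apply, Sum.map_inl, Sum.map_inr, Equiv.sumCompl_apply_inl,
          Equiv.sumCompl_apply_inr]
        constructor
        · intro h; exact ((e₂ i).2 (hclosed (e₁ j).2 h.symm)).elim
        · intro h; exact h.elim
      | inr j => exact Iff.rfl



lemma fval_congr (s : Finset (Σ n : ℕ, SimpleGraph (Fin n)))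
    (a : (Σ n : ℕ, SimpleGraph (Fin n)) → ℂ)
    {β γ : Type} [Fintype β] [Fintype γ] {G : SimpleGraph β} {G' : SimpleGraph γ}
    (φ : G ≃g G') : fval s a G = fval s a G' :=
  Finset.sum_congr rfl fun H _ => by rw [indCount_congr H.2 φ]

end FvalAux

open FvalAux

/-- A finite-support linear combination `f = ∑_H a_H · ind(H, ·)` over pairwise
non-isomorphic graphs `H` is additive (i.e. `f(G₁ ⊔ G₂) = f(G₁) + f(G₂)` for all
finite graphs `G₁, G₂`) if and only if `a_H = 0` for every `H` that is not
connected. -/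
theorem fval_additive_iff_support_connected
    (s : Finset (Σ n : ℕ, SimpleGraph (Fin n)))
    (a : (Σ n : ℕ, SimpleGraph (Fin n)) → ℂ)
    (hrep : ∀ H ∈ s, ∀ H' ∈ s, Nonempty (H.2 ≃g H'.2) → H = H') :
    (∀ (m₁ m₂ : ℕ) (G₁ : SimpleGraph (Fin m₁)) (G₂ : SimpleGraph (Fin m₂)),
        fval s a (G₁ ⊕g G₂) = fval s a G₁ + fval s a G₂) ↔
      (∀ H ∈ s, ¬ H.2.Connected → a H = 0) := by
  constructor
  · intro hadd
    suffices key : ∀ n : ℕ, ∀ H ∈ s, H.1 = n → ¬ H.2.Connected → a H = 0 by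
      intro H hs hc; exact key H.1 H hs rfl hc
    intro n
    induction n using Nat.strong_induction_on with
    | _ n ih =>
    intro H hs hn hcon
    rcases Nat.eq_zero_or_pos n with h0 | hpos
    · -- H is the empty graph
      subst h0
      haveI : IsEmpty (Fin H.1) := by rw [hn]; infer_instance
      have comp : ∀ {β : Type} [Fintype β] (G : SimpleGraph β), IsEmpty β →
          fval s a G = a H := by
        intro β _ G hβ
        rw [fval]
        rw [Finset.sum_eq_single_of_mem H hs]
        · rw [indCount_of_isEmpty, Nat.cast_one, mul_one]
        · intro H' hH' hne
          by_cases h0' : H'.1 = 0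
          · exfalso
            haveI : IsEmpty (Fin H'.1) := by rw [h0']; infer_instance
            exact hne (hrep H' hH' H hs ⟨isoOfIsEmpty _ _⟩)
          · rw [indCount_of_lt H'.2 G (by simp [Fintype.card_eq_zero_iff.mpr hβ]; omega),
              Nat.cast_zero, mul_zero]
      have hmain := hadd 0 0 ⊥ ⊥
      rw [comp (⊥ ⊕g ⊥ : SimpleGraph (Fin 0 ⊕ Fin 0)) (by infer_instance),
        comp (⊥ : SimpleGraph (Fin 0)) (by infer_instance)] at hmain
      exact (add_eq_right.mp hmain.symm)
    · -- H is nonempty and disconnected: decompose it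
      obtain ⟨m₁, m₂, G₁, G₂, hm₁, hm₂, hsum, ⟨φ⟩⟩ := decomp H.2 (hn ▸ hpos) hcon
      have heq := hadd m₁ m₂ G₁ G₂
      rw [fval_congr s a φ] at heq
      have hzero : ∑ H' ∈ s, a H' *
          ((indCount H'.2 H.2 : ℂ) - (indCount H'.2 G₁ : ℂ) - (indCount H'.2 G₂ : ℂ)) = 0 := by
        simp only [mul_sub, Finset.sum_sub_distrib]
        rw [fval, fval, fval] at heq
        linear_combination heq
      rw [Finset.sum_eq_single_of_mem H hs] at hzero
      · have h1 : indCount H.2 H.2 = 1 := by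
          rw [indCount_of_card_eq H.2 H.2 rfl, if_pos ⟨SimpleGraph.Iso.refl⟩]
        have hm₁n : m₁ < n := by omega
        have hm₂n : m₂ < n := by omega
        have h2 : indCount H.2 G₁ = 0 :=
          indCount_of_lt H.2 G₁ (by simp [Fintype.card_fin]; omega)
        have h3 : indCount H.2 G₂ = 0 :=
          indCount_of_lt H.2 G₂ (by simp [Fintype.card_fin]; omega)
        rw [h1, h2, h3] at hzero
        simpa using hzero
      · intro H' hH' hne
        by_cases h0' : H'.1 = 0
        · haveI : IsEmpty (Fin H'.1) := by rw [h0']; infer_instance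
          have ha : a H' = 0 := by
            refine ih 0 hpos H' hH' h0' fun hc => ?_
            exact hc.nonempty.elim isEmptyElim
          rw [ha, zero_mul]
        · by_cases hc : H'.2.Connected
          · have : indCount H'.2 H.2 = indCount H'.2 G₁ + indCount H'.2 G₂ := by
              rw [← indCount_congr H'.2 φ, indCount_sum hc]
            rw [this]
            push_cast
            ring
          · by_cases hlt : H'.1 < n
            · rw [ih H'.1 hlt H' hH' rfl hc, zero_mul]
            · have hge : n ≤ H'.1 := Nat.le_of_not_lt hlt
              have h2 : indCount H'.2 G₁ = 0 :=
                indCount_of_lt H'.2 G₁ (by simp [Fintype.card_fin]; omega)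
              have h3 : indCount H'.2 G₂ = 0 :=
                indCount_of_lt H'.2 G₂ (by simp [Fintype.card_fin]; omega)
              have h1 : indCount H'.2 H.2 = 0 := by
                rcases Nat.lt_or_ge n H'.1 with hlt' | hge'
                · exact indCount_of_lt H'.2 H.2 (by simp [Fintype.card_fin]; omega)
                · have hcards : Fintype.card (Fin H'.1) = Fintype.card (Fin H.1) := by
                    simp [Fintype.card_fin]; omega
                  rw [indCount_of_card_eq H'.2 H.2 hcards, if_neg]
                  intro ⟨ψ⟩
                  exact hne ((hrep H hs H' hH' ⟨ψ⟩).symm)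
              rw [h1, h2, h3]
              simp
  · intro hsupp m₁ m₂ G₁ G₂
    rw [fval, fval, fval, ← Finset.sum_add_distrib]
    refine Finset.sum_congr rfl fun H' hH' => ?_
    by_cases hc : H'.2.Connected
    · rw [indCount_sum hc]
      push_cast
      ring
    · rw [hsupp H' hH' hc, zero_mul, zero_mul, zero_mul, add_zero]
end

section
/- Let G be a graph of maximum degree at most Δ ≥ 2 and let λ ∈ ℂ satisfy |λ| ≤ (Δ-1)^{Δ-1}/Δ^Δ. Then the independence polynomial Z(G)(λ) = ∑_{I independent} λ^{|I|} is nonzero. -/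
open Finset
open scoped Classical

/-- The independence polynomial of `G` evaluated at `x`:
`Z(G)(x) = ∑_{I independent} x^{|I|}` (the empty set included). -/
noncomputable def indepPoly {V : Type} [Fintype V] (G : SimpleGraph V) (x : ℂ) : ℂ :=
  ∑ S : Finset V, if (∀ u ∈ S, ∀ v ∈ S, ¬ G.Adj u v) then x ^ S.card else 0

namespace ShearerAux

variable {V : Type} [Fintype V]

/-- Restricted independence polynomial: sum over independent subsets of `A`. -/
noncomputable def Zfn (G : SimpleGraph V) (lam : ℂ) (A : Finset V) : ℂ :=
  ∑ S ∈ A.powerset, if (∀ u ∈ S, ∀ w ∈ S, ¬ G.Adj u w) then lam ^ S.card else 0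

lemma Zfn_empty (G : SimpleGraph V) (lam : ℂ) : Zfn G lam ∅ = 1 := by
  simp [Zfn]

lemma Zfn_rec (G : SimpleGraph V) (lam : ℂ) (A : Finset V) (v : V) (hv : v ∈ A) :
    Zfn G lam A = Zfn G lam (A.erase v)
      + lam * Zfn G lam ((A.erase v) \ ((A.erase v).filter (G.Adj v))) := by
  have hvB : v ∉ A.erase v := Finset.notMem_erase v A
  have hsub : ((A.erase v) \ ((A.erase v).filter (G.Adj v))).powerset ⊆ (A.erase v).powerset :=
    Finset.powerset_mono.mpr (Finset.sdiff_subset)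
  conv_lhs => rw [← Finset.insert_erase hv]
  simp only [Zfn]
  rw [Finset.sum_powerset_insert hvB]
  congr 1
  have hzero : ∀ S ∈ (A.erase v).powerset,
      S ∉ ((A.erase v) \ ((A.erase v).filter (G.Adj v))).powerset →
      (if (∀ u ∈ insert v S, ∀ w ∈ insert v S, ¬ G.Adj u w)
        then lam ^ (insert v S).card else 0) = 0 := by
    intro S hS hS2
    rw [Finset.mem_powerset] at hS hS2
    obtain ⟨u, huS, hu2⟩ := Finset.not_subset.mp hS2
    have huB : u ∈ A.erase v := hS huS
    simp only [Finset.mem_sdiff, Finset.mem_filter, huB, true_and, not_and, not_not] at hu2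
    have hadj : G.Adj v u := hu2
    exact if_neg (fun hind =>
      hind v (Finset.mem_insert_self _ _) u (Finset.mem_insert_of_mem huS) hadj)
  calc ∑ S ∈ (A.erase v).powerset,
        (if (∀ u ∈ insert v S, ∀ w ∈ insert v S, ¬ G.Adj u w) then lam ^ (insert v S).card else 0)
      = ∑ S ∈ ((A.erase v) \ ((A.erase v).filter (G.Adj v))).powerset,
        (if (∀ u ∈ insert v S, ∀ w ∈ insert v S, ¬ G.Adj u w) then lam ^ (insert v S).card else 0) :=
        (Finset.sum_subset hsub hzero).symm
    _ = ∑ S ∈ ((A.erase v) \ ((A.erase v).filter (G.Adj v))).powerset,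
        lam * (if (∀ u ∈ S, ∀ w ∈ S, ¬ G.Adj u w) then lam ^ S.card else 0) := by
        apply Finset.sum_congr rfl
        intro S hS
        rw [Finset.mem_powerset] at hS
        have hvS : v ∉ S := fun h => hvB (Finset.sdiff_subset (hS h))
        have hcard : (insert v S).card = S.card + 1 := Finset.card_insert_of_notMem hvS
        have hiff : (∀ u ∈ insert v S, ∀ w ∈ insert v S, ¬ G.Adj u w) ↔
            (∀ u ∈ S, ∀ w ∈ S, ¬ G.Adj u w) := by
          constructor
          · intro h u hu w hw
            exact h u (Finset.mem_insert_of_mem hu) w (Finset.mem_insert_of_mem hw)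
          · intro h u hu w hw
            have hnadj : ∀ x ∈ S, ¬ G.Adj v x := by
              intro x hx
              have := hS hx
              rw [Finset.mem_sdiff, Finset.mem_filter] at this
              exact fun hc => this.2 ⟨this.1, hc⟩
            rcases Finset.mem_insert.mp hu with rfl | hu' <;>
              rcases Finset.mem_insert.mp hw with rfl | hw'
            · exact G.loopless.irrefl _
            · exact hnadj _ hw'
            · exact fun hc => hnadj _ hu' hc.symm
            · exact h _ hu' _ hw'
        by_cases hind : (∀ u ∈ S, ∀ w ∈ S, ¬ G.Adj u w)
        · rw [if_pos (hiff.mpr hind), if_pos hind, hcard, pow_succ]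
          ring
        · rw [if_neg (fun hc => hind (hiff.mp hc)), if_neg hind, mul_zero]
    _ = lam * ∑ S ∈ ((A.erase v) \ ((A.erase v).filter (G.Adj v))).powerset,
        (if (∀ u ∈ S, ∀ w ∈ S, ¬ G.Adj u w) then lam ^ S.card else 0) := by
        rw [Finset.mul_sum]

lemma main (G : SimpleGraph V) (Δ : ℕ) (hΔ : 2 ≤ Δ)
    (hdegf : ∀ u : V, (univ.filter (G.Adj u)).card ≤ Δ)
    (lam : ℂ) (hlam : ‖lam‖ ≤ ((Δ : ℝ) - 1) ^ (Δ - 1) / (Δ : ℝ) ^ Δ) :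
    ∀ n : ℕ, ∀ A : Finset V, A.card ≤ n →
      Zfn G lam A ≠ 0 ∧
      ∀ v ∈ A, ((A.erase v).filter (G.Adj v)).card ≤ Δ - 1 →
        ((Δ:ℝ) - 1) * ‖Zfn G lam (A.erase v)‖
          < (Δ:ℝ) * ‖Zfn G lam A‖ := by
  have hD2 : (2:ℝ) ≤ (Δ:ℝ) := by exact_mod_cast hΔ
  have hD0 : (0:ℝ) < (Δ:ℝ) := by linarith
  have hD1pos : (0:ℝ) < (Δ:ℝ) - 1 := by linarith
  have hlamD : ‖lam‖ * (Δ:ℝ) ^ Δ ≤ ((Δ:ℝ) - 1) ^ (Δ - 1) :=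
    (le_div_iff₀ (pow_pos hD0 Δ)).mp hlam
  have hDeq : ((Δ:ℝ)) ^ Δ = (Δ:ℝ) ^ (Δ - 1) * (Δ:ℝ) := by
    rw [← pow_succ]
    congr 1
    omega
  intro n
  induction n with
  | zero =>
    intro A hA
    have hAe : A = ∅ := Finset.card_eq_zero.mp (Nat.le_zero.mp hA)
    subst hAe
    refine ⟨by rw [Zfn_empty]; exact one_ne_zero, ?_⟩
    intro v hv
    simp at hv
  | succ n IH =>
    intro A hA
    by_cases hAe : A = ∅
    · subst hAe
      refine ⟨by rw [Zfn_empty]; exact one_ne_zero, ?_⟩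
      intro v hv
      simp at hv
    -- the key per-vertex estimates
    have key : ∀ v ∈ A,
        (‖lam‖ * ‖Zfn G lam
            ((A.erase v) \ ((A.erase v).filter (G.Adj v)))‖
          < ‖Zfn G lam (A.erase v)‖) ∧
        (((A.erase v).filter (G.Adj v)).card ≤ Δ - 1 →
          (Δ:ℝ) * (‖lam‖ * ‖Zfn G lam
            ((A.erase v) \ ((A.erase v).filter (G.Adj v)))‖)
          < ‖Zfn G lam (A.erase v)‖) := by
      intro v hv
      set B := A.erase v with hBdef
      set s := B.filter (G.Adj v) with hsdef
      have hBcard : B.card ≤ n := by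
        have h1 : B.card = A.card - 1 := Finset.card_erase_of_mem hv
        have hA1 : 1 ≤ A.card := Finset.card_pos.mpr (Finset.nonempty_of_ne_empty hAe)
        omega
      have hZBne : Zfn G lam B ≠ 0 := (IH B hBcard).1
      have habs0 : 0 < ‖Zfn G lam B‖ := norm_pos_iff.mpr hZBne
      have hkΔ : s.card ≤ Δ := by
        refine le_trans (Finset.card_le_card ?_) (hdegf v)
        intro x hx
        rw [Finset.mem_filter] at hx ⊢
        exact ⟨Finset.mem_univ x, hx.2⟩
      -- chain lemma: removing a set of neighbours of v from B
      have chain : ∀ t : Finset V, t ⊆ s →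
          (((Δ:ℝ) - 1) ^ t.card * ‖Zfn G lam (B \ t)‖
            ≤ (Δ:ℝ) ^ t.card * ‖Zfn G lam B‖) ∧
          (t.Nonempty →
            ((Δ:ℝ) - 1) ^ t.card * ‖Zfn G lam (B \ t)‖
              < (Δ:ℝ) ^ t.card * ‖Zfn G lam B‖) := by
        intro t
        induction t using Finset.induction_on with
        | empty =>
          intro _
          constructor
          · simp
          · rintro ⟨x, hx⟩
            simp at hx
        | @insert u t' hu ih =>
          intro hsub
          have hus : u ∈ s := hsub (Finset.mem_insert_self _ _)
          have ht's : t' ⊆ s := fun x hx => hsub (Finset.mem_insert_of_mem hx)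
          have hadj : G.Adj v u := (Finset.mem_filter.mp hus).2
          have huB : u ∈ B := (Finset.mem_filter.mp hus).1
          have huB' : u ∈ B \ t' := Finset.mem_sdiff.mpr ⟨huB, hu⟩
          have hrw : B \ insert u t' = (B \ t').erase u := Finset.sdiff_insert B t' u
          have hB'card : (B \ t').card ≤ n :=
            le_trans (Finset.card_le_card Finset.sdiff_subset) hBcard
          obtain ⟨hZ'ne, hrat⟩ := IH (B \ t') hB'card
          have hdeg' : (((B \ t').erase u).filter (G.Adj u)).card ≤ Δ - 1 := by
            have hsub2 : ((B \ t').erase u).filter (G.Adj u) ⊆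
                (univ.filter (G.Adj u)).erase v := by
              intro x hx
              rw [Finset.mem_filter] at hx
              have hxB : x ∈ B := (Finset.mem_sdiff.mp (Finset.mem_of_mem_erase hx.1)).1
              have hxv : x ≠ v := Finset.ne_of_mem_erase hxB
              rw [Finset.mem_erase, Finset.mem_filter]
              exact ⟨hxv, Finset.mem_univ x, hx.2⟩
            have hvmem : v ∈ univ.filter (G.Adj u) := by
              rw [Finset.mem_filter]
              exact ⟨Finset.mem_univ v, hadj.symm⟩
            calc (((B \ t').erase u).filter (G.Adj u)).card
                ≤ ((univ.filter (G.Adj u)).erase v).card := Finset.card_le_card hsub2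
              _ = (univ.filter (G.Adj u)).card - 1 := Finset.card_erase_of_mem hvmem
              _ ≤ Δ - 1 := Nat.sub_le_sub_right (hdegf u) 1
          have hstep := hrat u huB' hdeg'
          obtain ⟨ih1, _⟩ := ih ht's
          have hmain : ((Δ:ℝ) - 1) ^ (insert u t').card
                * ‖Zfn G lam (B \ insert u t')‖
              < (Δ:ℝ) ^ (insert u t').card * ‖Zfn G lam B‖ := by
            rw [hrw, Finset.card_insert_of_notMem hu]
            calc ((Δ:ℝ) - 1) ^ (t'.card + 1) * ‖Zfn G lam ((B \ t').erase u)‖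
                = ((Δ:ℝ) - 1) ^ t'.card
                  * (((Δ:ℝ) - 1) * ‖Zfn G lam ((B \ t').erase u)‖) := by
                  rw [pow_succ]; ring
              _ < ((Δ:ℝ) - 1) ^ t'.card * ((Δ:ℝ) * ‖Zfn G lam (B \ t')‖) :=
                  mul_lt_mul_of_pos_left hstep (pow_pos hD1pos _)
              _ = (Δ:ℝ) * (((Δ:ℝ) - 1) ^ t'.card * ‖Zfn G lam (B \ t')‖) := by
                  ring
              _ ≤ (Δ:ℝ) * ((Δ:ℝ) ^ t'.card * ‖Zfn G lam B‖) :=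
                  mul_le_mul_of_nonneg_left ih1 hD0.le
              _ = (Δ:ℝ) ^ (t'.card + 1) * ‖Zfn G lam B‖ := by
                  rw [pow_succ]; ring
          exact ⟨hmain.le, fun _ => hmain⟩
      by_cases hs : s = ∅
      · -- no neighbours in B
        have hBB : B \ s = B := by rw [hs, Finset.sdiff_empty]
        have hplt : ((Δ:ℝ) - 1) ^ (Δ - 1) < (Δ:ℝ) ^ (Δ - 1) :=
          pow_lt_pow_left₀ (by linarith) (by linarith) (by omega)
        have h3 : ‖lam‖ * (Δ:ℝ) < 1 := by
          have hp : (0:ℝ) < (Δ:ℝ) ^ (Δ - 1) := pow_pos hD0 _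
          rw [← mul_lt_mul_iff_of_pos_right hp]
          calc ‖lam‖ * (Δ:ℝ) * (Δ:ℝ) ^ (Δ - 1)
              = ‖lam‖ * (Δ:ℝ) ^ Δ := by rw [hDeq]; ring
            _ < (Δ:ℝ) ^ (Δ - 1) := lt_of_le_of_lt hlamD hplt
            _ = 1 * (Δ:ℝ) ^ (Δ - 1) := (one_mul _).symm
        have hG2 : (Δ:ℝ) * (‖lam‖ * ‖Zfn G lam (B \ s)‖)
            < ‖Zfn G lam B‖ := by
          rw [hBB]
          nlinarith [norm_nonneg lam, habs0]
        refine ⟨?_, fun _ => hG2⟩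
        calc ‖lam‖ * ‖Zfn G lam (B \ s)‖
            ≤ (Δ:ℝ) * (‖lam‖ * ‖Zfn G lam (B \ s)‖) := by
              apply le_mul_of_one_le_left
                (mul_nonneg (norm_nonneg _) (norm_nonneg _)) (by linarith)
          _ < ‖Zfn G lam B‖ := hG2
      · have hsne : s.Nonempty := Finset.nonempty_of_ne_empty hs
        have hc := (chain s subset_rfl).2 hsne
        by_cases hkd : s.card ≤ Δ - 1
        · -- G2 via the numeric inequality
          have hnum1 : ((Δ:ℝ) - 1) ^ (Δ - 1) * (Δ:ℝ) ^ s.card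
              ≤ ((Δ:ℝ) - 1) ^ s.card * (Δ:ℝ) ^ (Δ - 1) := by
            have hx : ((Δ:ℝ) - 1) ^ (Δ - 1 - s.card) ≤ (Δ:ℝ) ^ (Δ - 1 - s.card) :=
              pow_le_pow_left₀ (by linarith) (by linarith) _
            have hsplit1 : ((Δ:ℝ) - 1) ^ (Δ - 1)
                = ((Δ:ℝ) - 1) ^ s.card * ((Δ:ℝ) - 1) ^ (Δ - 1 - s.card) := by
              rw [← pow_add]; congr 1; omega
            have hsplit2 : ((Δ:ℝ)) ^ (Δ - 1)
                = ((Δ:ℝ)) ^ s.card * ((Δ:ℝ)) ^ (Δ - 1 - s.card) := by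
              rw [← pow_add]; congr 1; omega
            calc ((Δ:ℝ) - 1) ^ (Δ - 1) * (Δ:ℝ) ^ s.card
                = (((Δ:ℝ) - 1) ^ s.card * (Δ:ℝ) ^ s.card)
                  * ((Δ:ℝ) - 1) ^ (Δ - 1 - s.card) := by
                  rw [hsplit1]; ring
              _ ≤ (((Δ:ℝ) - 1) ^ s.card * (Δ:ℝ) ^ s.card)
                  * (Δ:ℝ) ^ (Δ - 1 - s.card) := by
                  apply mul_le_mul_of_nonneg_left hx
                  exact mul_nonneg (pow_nonneg hD1pos.le _) (pow_nonneg hD0.le _)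
              _ = ((Δ:ℝ) - 1) ^ s.card * (Δ:ℝ) ^ (Δ - 1) := by
                  rw [hsplit2]; ring
          have hG2 : (Δ:ℝ) * (‖lam‖ * ‖Zfn G lam (B \ s)‖)
              < ‖Zfn G lam B‖ := by
            have hM : (0:ℝ) < ((Δ:ℝ) - 1) ^ s.card * (Δ:ℝ) ^ (Δ - 1) :=
              mul_pos (pow_pos hD1pos _) (pow_pos hD0 _)
            rw [← mul_lt_mul_iff_of_pos_right hM]
            calc (Δ:ℝ) * (‖lam‖ * ‖Zfn G lam (B \ s)‖)
                  * (((Δ:ℝ) - 1) ^ s.card * (Δ:ℝ) ^ (Δ - 1))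
                = (‖lam‖ * (Δ:ℝ) ^ Δ)
                  * (((Δ:ℝ) - 1) ^ s.card * ‖Zfn G lam (B \ s)‖) := by
                  rw [hDeq]; ring
              _ ≤ ((Δ:ℝ) - 1) ^ (Δ - 1)
                  * (((Δ:ℝ) - 1) ^ s.card * ‖Zfn G lam (B \ s)‖) := by
                  apply mul_le_mul_of_nonneg_right hlamD
                  exact mul_nonneg (pow_nonneg hD1pos.le _) (norm_nonneg _)
              _ < ((Δ:ℝ) - 1) ^ (Δ - 1)
                  * ((Δ:ℝ) ^ s.card * ‖Zfn G lam B‖) :=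
                  mul_lt_mul_of_pos_left hc (pow_pos hD1pos _)
              _ = (((Δ:ℝ) - 1) ^ (Δ - 1) * (Δ:ℝ) ^ s.card) * ‖Zfn G lam B‖ := by
                  ring
              _ ≤ (((Δ:ℝ) - 1) ^ s.card * (Δ:ℝ) ^ (Δ - 1)) * ‖Zfn G lam B‖ :=
                  mul_le_mul_of_nonneg_right hnum1 habs0.le
              _ = ‖Zfn G lam B‖
                  * (((Δ:ℝ) - 1) ^ s.card * (Δ:ℝ) ^ (Δ - 1)) := by ring
          refine ⟨?_, fun _ => hG2⟩
          calc ‖lam‖ * ‖Zfn G lam (B \ s)‖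
              ≤ (Δ:ℝ) * (‖lam‖ * ‖Zfn G lam (B \ s)‖) := by
                apply le_mul_of_one_le_left
                  (mul_nonneg (norm_nonneg _) (norm_nonneg _)) (by linarith)
            _ < ‖Zfn G lam B‖ := hG2
        · -- here s.card = Δ
          have hkeq : s.card = Δ := by omega
          refine ⟨?_, fun h => absurd h hkd⟩
          by_cases hlam0 : lam = 0
          · have hz : ‖lam‖ = 0 := by rw [hlam0]; exact norm_zero
            rw [hz, zero_mul]
            exact habs0
          have hl0 : 0 < ‖lam‖ := norm_pos_iff.mpr hlam0
          have hnum3 : ((Δ:ℝ) - 1) ^ (Δ - 1) ≤ ((Δ:ℝ) - 1) ^ s.card := by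
            rw [hkeq]
            exact pow_le_pow_right₀ (by linarith) (Nat.sub_le Δ 1)
          have hM : (0:ℝ) < ((Δ:ℝ) - 1) ^ s.card := pow_pos hD1pos _
          rw [← mul_lt_mul_iff_of_pos_right hM]
          calc ‖lam‖ * ‖Zfn G lam (B \ s)‖ * ((Δ:ℝ) - 1) ^ s.card
              = ‖lam‖
                * (((Δ:ℝ) - 1) ^ s.card * ‖Zfn G lam (B \ s)‖) := by ring
            _ < ‖lam‖ * ((Δ:ℝ) ^ s.card * ‖Zfn G lam B‖) :=
                mul_lt_mul_of_pos_left hc hl0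
            _ = (‖lam‖ * (Δ:ℝ) ^ Δ) * ‖Zfn G lam B‖ := by
                rw [hkeq]; ring
            _ ≤ ((Δ:ℝ) - 1) ^ (Δ - 1) * ‖Zfn G lam B‖ :=
                mul_le_mul_of_nonneg_right hlamD habs0.le
            _ ≤ ((Δ:ℝ) - 1) ^ s.card * ‖Zfn G lam B‖ :=
                mul_le_mul_of_nonneg_right hnum3 habs0.le
            _ = ‖Zfn G lam B‖ * ((Δ:ℝ) - 1) ^ s.card := by ring
    -- now conclude
    obtain ⟨v₀, hv₀⟩ := Finset.nonempty_of_ne_empty hAe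
    constructor
    · -- Zfn G lam A ≠ 0
      intro h0
      have hZA := Zfn_rec G lam A v₀ hv₀
      have hG1 := (key v₀ hv₀).1
      have heq : Zfn G lam (A.erase v₀)
          = -(lam * Zfn G lam ((A.erase v₀) \ ((A.erase v₀).filter (G.Adj v₀)))) := by
        linear_combination h0 - hZA
      have : ‖Zfn G lam (A.erase v₀)‖
          = ‖lam‖ * ‖Zfn G lam
            ((A.erase v₀) \ ((A.erase v₀).filter (G.Adj v₀)))‖ := by
        rw [heq, norm_neg, norm_mul]
      linarith
    · intro v hv hdv
      have hZA := Zfn_rec G lam A v hv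
      have hG2 := (key v hv).2 hdv
      have htri : ‖Zfn G lam (A.erase v)‖
          ≤ ‖Zfn G lam A‖
            + ‖lam‖ * ‖Zfn G lam
              ((A.erase v) \ ((A.erase v).filter (G.Adj v)))‖ := by
        have heq : Zfn G lam (A.erase v)
            = Zfn G lam A
              + (-(lam * Zfn G lam ((A.erase v) \ ((A.erase v).filter (G.Adj v))))) := by
          linear_combination -hZA
        rw [heq]
        calc ‖_‖ ≤ ‖Zfn G lam A‖
              + ‖-(lam * Zfn G lam
                ((A.erase v) \ ((A.erase v).filter (G.Adj v))))‖ := norm_add_le _ _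
          _ = ‖Zfn G lam A‖
              + ‖lam‖ * ‖Zfn G lam
                ((A.erase v) \ ((A.erase v).filter (G.Adj v)))‖ := by
              rw [norm_neg, norm_mul]
      have hDtri := mul_le_mul_of_nonneg_left htri hD0.le
      nlinarith [hDtri, hG2]

end ShearerAux

/-- Shearer / Scott–Sokal: if `G` has maximum degree at most `Δ ≥ 2` and
`|λ| ≤ (Δ-1)^{Δ-1}/Δ^Δ`, then the independence polynomial `Z(G)(λ)` is nonzero. -/
theorem indepPoly_ne_zero_of_small
    {V : Type} [Fintype V] (G : SimpleGraph V) [DecidableRel G.Adj]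
    (Δ : ℕ) (hΔ : 2 ≤ Δ) (hdeg : ∀ v : V, G.degree v ≤ Δ)
    (lam : ℂ)
    (hlam : ‖lam‖ ≤ ((Δ : ℝ) - 1) ^ (Δ - 1) / (Δ : ℝ) ^ Δ) :
    indepPoly G lam ≠ 0 := by
  have hdegf : ∀ u : V,
      (@Finset.filter V (G.Adj u) (fun a => Classical.propDecidable (G.Adj u a)) univ).card
        ≤ Δ := by
    intro u
    have e : (@Finset.filter V (G.Adj u) (fun a => Classical.propDecidable (G.Adj u a)) univ)
        = G.neighborFinset u := by
      ext x
      simp [SimpleGraph.mem_neighborFinset]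
    rw [e]
    exact hdeg u
  have h := (ShearerAux.main G Δ hΔ hdegf lam hlam (univ : Finset V).card univ le_rfl).1
  have heq : indepPoly G lam = ShearerAux.Zfn G lam univ := by
    rw [indepPoly, ShearerAux.Zfn, Finset.powerset_univ]
  rw [heq]
  exact h
end

section
/- Let G be a graph of maximum degree at most Δ ≥ 2 and let λ ∈ ℝ with 0 ≤ λ ≤ (Δ-1)^{Δ-1}/Δ^Δ. Then Z(G)(-λ) > 0, i.e. the independence polynomial of G is strictly positive on the whole real interval [-(Δ-1)^{Δ-1}/Δ^Δ, (Δ-1)^{Δ-1}/Δ^Δ]. -/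
open Finset
open scoped Classical

/-- The (real) independence polynomial of `G` evaluated at `x`:
`Z(G)(x) = ∑_{I independent} x^{|I|}` (the empty set included). -/
noncomputable def indepPolyR {V : Type} [Fintype V] (G : SimpleGraph V) (x : ℝ) : ℝ :=
  ∑ S : Finset V, if (∀ u ∈ S, ∀ v ∈ S, ¬ G.Adj u v) then x ^ S.card else 0

/-- Partial independence polynomial: sum over independent subsets of `A`. -/
noncomputable def Zaux {V : Type} [Fintype V] (G : SimpleGraph V) (x : ℝ) (A : Finset V) : ℝ :=
  ∑ S ∈ A.powerset, if (∀ u ∈ S, ∀ v ∈ S, ¬ G.Adj u v) then x ^ S.card else 0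

lemma Zaux_empty {V : Type} [Fintype V] (G : SimpleGraph V) (x : ℝ) : Zaux G x ∅ = 1 := by
  simp [Zaux]

lemma Zaux_rec {V : Type} [Fintype V] (G : SimpleGraph V) (x : ℝ) (A : Finset V) (v : V)
    (hv : v ∈ A) (N : Finset V) (hN : ∀ u, u ∈ N ↔ G.Adj v u) :
    Zaux G x A = Zaux G x (A.erase v)
      + x * Zaux G x ((A.erase v) \ N) := by
  classical
  have hvB : v ∉ A.erase v := notMem_erase v A
  set B := A.erase v with hB
  set f : Finset V → ℝ :=
    fun S => if (∀ u ∈ S, ∀ w ∈ S, ¬ G.Adj u w) then x ^ S.card else 0 with hf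
  have h1 : Zaux G x A = ∑ T ∈ B.powerset, f T + ∑ T ∈ B.powerset, f (insert v T) := by
    rw [Zaux, ← insert_erase hv, Finset.sum_powerset_insert hvB]
  have hsub : (B \ N).powerset ⊆ B.powerset :=
    powerset_mono.mpr sdiff_subset
  have h2 : ∑ T ∈ B.powerset, f (insert v T)
      = ∑ T ∈ (B \ N).powerset, f (insert v T) := by
    refine (Finset.sum_subset hsub ?_).symm
    intro T hT hT2
    rw [mem_powerset] at hT
    rw [mem_powerset] at hT2
    obtain ⟨u, huT, huN⟩ : ∃ u ∈ T, u ∉ B \ N := by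
      by_contra hcon
      push_neg at hcon
      exact hT2 hcon
    have huB : u ∈ B := hT huT
    have huNv : u ∈ N := by
      by_contra h
      exact huN (mem_sdiff.mpr ⟨huB, h⟩)
    have hadj : G.Adj v u := (hN u).mp huNv
    rw [hf]
    simp only
    rw [if_neg]
    intro hind
    exact hind v (mem_insert_self v T) u (mem_insert_of_mem huT) hadj
  have h3 : ∀ T ∈ (B \ N).powerset, f (insert v T) = x * f T := by
    intro T hT
    rw [mem_powerset] at hT
    have hvT : v ∉ T := by
      intro h
      exact hvB (mem_sdiff.mp (hT h)).1
    have hcard : (insert v T).card = T.card + 1 := card_insert_of_notMem hvT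
    have hNT : ∀ u ∈ T, ¬ G.Adj v u := by
      intro u hu hadj
      exact (mem_sdiff.mp (hT hu)).2 ((hN u).mpr hadj)
    have hiff : (∀ u ∈ insert v T, ∀ w ∈ insert v T, ¬ G.Adj u w)
        ↔ (∀ u ∈ T, ∀ w ∈ T, ¬ G.Adj u w) := by
      constructor
      · intro h u hu w hw
        exact h u (mem_insert_of_mem hu) w (mem_insert_of_mem hw)
      · intro h u hu w hw
        rcases mem_insert.mp hu with rfl | hu' <;> rcases mem_insert.mp hw with rfl | hw'
        · exact G.loopless.irrefl _
        · exact hNT w hw'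
        · intro hadj
          exact hNT u hu' hadj.symm
        · exact h u hu' w hw'
    rw [hf]
    simp only
    rw [hcard]
    by_cases hind : ∀ u ∈ T, ∀ w ∈ T, ¬ G.Adj u w
    · rw [if_pos (hiff.mpr hind), if_pos hind, pow_succ]
      ring
    · rw [if_neg (fun h => hind (hiff.mp h)), if_neg hind, mul_zero]
  rw [h1, h2, Finset.sum_congr rfl h3, ← Finset.mul_sum]
  rfl

lemma Zaux_main {V : Type} [Fintype V] (G : SimpleGraph V) [DecidableRel G.Adj]
    (Δ : ℕ) (hΔ : 2 ≤ Δ) (hdeg : ∀ v : V, G.degree v ≤ Δ)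
    (lam : ℝ) (h0 : 0 ≤ lam)
    (hlam : lam ≤ ((Δ : ℝ) - 1) ^ (Δ - 1) / (Δ : ℝ) ^ Δ) :
    ∀ n : ℕ, ∀ A : Finset V, A.card ≤ n →
      0 < Zaux G (-lam) A ∧
      ∀ v ∈ A, (G.neighborFinset v ∩ A).card ≤ Δ - 1 →
        (1 - 1/(Δ:ℝ)) * Zaux G (-lam) (A.erase v) < Zaux G (-lam) A := by
  classical
  have hD2 : (2:ℝ) ≤ (Δ:ℝ) := by exact_mod_cast hΔ
  have hD0 : (0:ℝ) < (Δ:ℝ) := by linarith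
  set c : ℝ := 1 - 1/(Δ:ℝ) with hc
  have hDinv : 0 < 1/(Δ:ℝ) := by positivity
  have hDinv2 : 1/(Δ:ℝ) ≤ 1/2 := by
    apply div_le_div_of_nonneg_left (by norm_num) (by norm_num) hD2
  have hc0 : 0 < c := by rw [hc]; linarith
  have hc1 : c < 1 := by rw [hc]; linarith
  have hD1 : (1:ℝ) ≤ (Δ:ℝ) - 1 := by linarith
  have hcform : c = ((Δ:ℝ)-1)/(Δ:ℝ) := by
    rw [hc]; field_simp
  have hpowD : (Δ:ℝ)^Δ = (Δ:ℝ)^(Δ-1) * (Δ:ℝ) := by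
    rw [← pow_succ]
    congr 1
    omega
  have key1 : lam * (Δ:ℝ) ≤ c ^ (Δ - 1) := by
    rw [hcform, div_pow]
    have h1 : lam * (Δ:ℝ) ≤ (((Δ:ℝ)-1)^(Δ-1) / (Δ:ℝ)^Δ) * (Δ:ℝ) :=
      mul_le_mul_of_nonneg_right hlam hD0.le
    refine h1.trans_eq ?_
    rw [hpowD]
    field_simp
  have key2 : lam ≤ c ^ Δ := by
    rw [hcform, div_pow]
    refine hlam.trans ?_
    apply div_le_div_of_nonneg_right ?_ (by positivity)
    exact pow_le_pow_right₀ hD1 (Nat.sub_le Δ 1)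
  have key3 : lam < 1/(Δ:ℝ) := by
    have h1 : c ^ (Δ - 1) < 1 := pow_lt_one₀ hc0.le hc1 (by omega)
    rw [lt_div_iff₀ hD0]
    linarith
  intro n
  induction n with
  | zero =>
    intro A hA
    have hAe : A = ∅ := card_eq_zero.mp (Nat.le_zero.mp hA)
    subst hAe
    refine ⟨by rw [Zaux_empty]; norm_num, ?_⟩
    intro v hv
    simp at hv
  | succ n IH =>
    intro A hA
    -- the chain lemma
    have chain : ∀ B : Finset V, B.card ≤ n → ∀ v : V, v ∉ B → ∀ C : Finset V,
        C ⊆ G.neighborFinset v ∩ B →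
        (c ^ C.card * Zaux G (-lam) (B \ C) ≤ Zaux G (-lam) B ∧
          (C.Nonempty → c ^ C.card * Zaux G (-lam) (B \ C) < Zaux G (-lam) B)) := by
      intro B hB v hvB C
      induction C using Finset.induction_on with
      | empty =>
        intro _
        constructor
        · simp
        · intro h
          exact absurd h (by simp)
      | insert a C ha IHC =>
        intro hsub
        have hC : C ⊆ G.neighborFinset v ∩ B := (subset_insert a C).trans hsub
        have h1 := IHC hC
        have haN : a ∈ G.neighborFinset v ∩ B := hsub (mem_insert_self a C)
        have haB : a ∈ B := (mem_inter.mp haN).2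
        have hadj : G.Adj v a := by
          have := (mem_inter.mp haN).1
          rwa [SimpleGraph.mem_neighborFinset] at this
        have haBC : a ∈ B \ C := mem_sdiff.mpr ⟨haB, ha⟩
        have hdegA : (G.neighborFinset a ∩ (B \ C)).card ≤ Δ - 1 := by
          have hsub2 : G.neighborFinset a ∩ (B \ C) ⊆ (G.neighborFinset a).erase v := by
            intro u hu
            rw [mem_inter] at hu
            rw [mem_erase]
            refine ⟨?_, hu.1⟩
            intro h
            subst h
            exact hvB (mem_sdiff.mp hu.2).1
          have hva : v ∈ G.neighborFinset a := by
            rw [SimpleGraph.mem_neighborFinset]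
            exact hadj.symm
          calc (G.neighborFinset a ∩ (B \ C)).card
              ≤ ((G.neighborFinset a).erase v).card := card_le_card hsub2
            _ = G.degree a - 1 := by
                rw [card_erase_of_mem hva, SimpleGraph.card_neighborFinset_eq_degree]
            _ ≤ Δ - 1 := Nat.sub_le_sub_right (hdeg a) 1
        have hcard2 : (B \ C).card ≤ n := le_trans (card_le_card sdiff_subset) hB
        have hb := (IH (B \ C) hcard2).2 a haBC hdegA
        have hrw : B \ insert a C = (B \ C).erase a := sdiff_insert B C a
        have hstrict : c ^ (insert a C).card * Zaux G (-lam) (B \ insert a C) < Zaux G (-lam) B := by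
          rw [hrw, card_insert_of_notMem ha, pow_succ]
          calc c ^ C.card * c * Zaux G (-lam) ((B \ C).erase a)
              = c ^ C.card * ((1 - 1/(Δ:ℝ)) * Zaux G (-lam) ((B \ C).erase a)) := by
                rw [← hc]; ring
            _ < c ^ C.card * Zaux G (-lam) (B \ C) :=
                mul_lt_mul_of_pos_left hb (pow_pos hc0 _)
            _ ≤ Zaux G (-lam) B := h1.1
        exact ⟨hstrict.le, fun _ => hstrict⟩
    -- common facts for a vertex of A
    rcases eq_or_ne A ∅ with hAe | hAe
    · subst hAe
      refine ⟨by rw [Zaux_empty]; norm_num, ?_⟩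
      intro v hv
      simp at hv
    have hrec : ∀ v ∈ A, Zaux G (-lam) A
        = Zaux G (-lam) (A.erase v)
          - lam * Zaux G (-lam) ((A.erase v) \ (G.neighborFinset v ∩ (A.erase v))) := by
      intro v hv
      rw [Zaux_rec G (-lam) A v hv (G.neighborFinset v)
        (fun u => SimpleGraph.mem_neighborFinset G v u)]
      have heq : (A.erase v) \ G.neighborFinset v
          = (A.erase v) \ (G.neighborFinset v ∩ (A.erase v)) := by
        ext u
        simp only [mem_sdiff, mem_inter]
        tauto
      rw [← heq]
      ring
    have hBfacts : ∀ v ∈ A, (A.erase v).card ≤ n := by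
      intro v hv
      have h1 : (A.erase v).card = A.card - 1 := card_erase_of_mem hv
      have h2 : 1 ≤ A.card := card_pos.mpr ⟨v, hv⟩
      omega
    have hNvsub : ∀ v : V, G.neighborFinset v ∩ (A.erase v) ⊆ G.neighborFinset v :=
      fun v => inter_subset_left
    have hdle : ∀ v : V, (G.neighborFinset v ∩ (A.erase v)).card ≤ Δ := by
      intro v
      calc (G.neighborFinset v ∩ (A.erase v)).card
          ≤ (G.neighborFinset v).card := card_le_card (hNvsub v)
        _ = G.degree v := SimpleGraph.card_neighborFinset_eq_degree G v
        _ ≤ Δ := hdeg v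
    -- part (a)
    have ha : 0 < Zaux G (-lam) A := by
      obtain ⟨v, hv⟩ := nonempty_iff_ne_empty.mpr hAe
      set B := A.erase v with hBdef
      set Nv := G.neighborFinset v ∩ B with hNv
      have hBn : B.card ≤ n := hBfacts v hv
      have posB : 0 < Zaux G (-lam) B := (IH B hBn).1
      have hvB : v ∉ B := notMem_erase v A
      have hrecv : Zaux G (-lam) A
          = Zaux G (-lam) B - lam * Zaux G (-lam) (B \ Nv) := hrec v hv
      have posBN : 0 < Zaux G (-lam) (B \ Nv) :=
        (IH (B \ Nv) (le_trans (card_le_card sdiff_subset) hBn)).1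
      rcases h0.eq_or_lt with hl0 | hl0
      · have hz : lam * Zaux G (-lam) (B \ Nv) = 0 := by rw [← hl0]; ring
        linarith
      rcases Nv.eq_empty_or_nonempty with hNe | hNe
      · have hBNv : Zaux G (-lam) (B \ Nv) = Zaux G (-lam) B := by
          rw [hNe, sdiff_empty]
        rw [hBNv] at hrecv
        have hlam1 : lam < 1 := lt_of_lt_of_le key3 (by linarith)
        nlinarith
      · have hch := (chain B hBn v hvB Nv subset_rfl).2 hNe
        have hld : lam ≤ c ^ Nv.card :=
          key2.trans (pow_le_pow_of_le_one hc0.le hc1.le (hdle v))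
        have h5 : lam * Zaux G (-lam) (B \ Nv) < Zaux G (-lam) B :=
          calc lam * Zaux G (-lam) (B \ Nv) ≤ c ^ Nv.card * Zaux G (-lam) (B \ Nv) :=
                mul_le_mul_of_nonneg_right hld posBN.le
            _ < Zaux G (-lam) B := hch
        linarith
    refine ⟨ha, ?_⟩
    -- part (b)
    intro v hv hd
    set B := A.erase v with hBdef
    set Nv := G.neighborFinset v ∩ B with hNv
    have hBn : B.card ≤ n := hBfacts v hv
    have posB : 0 < Zaux G (-lam) B := (IH B hBn).1
    have hvB : v ∉ B := notMem_erase v A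
    have hrecv : Zaux G (-lam) A
        = Zaux G (-lam) B - lam * Zaux G (-lam) (B \ Nv) := hrec v hv
    have posBN : 0 < Zaux G (-lam) (B \ Nv) :=
      (IH (B \ Nv) (le_trans (card_le_card sdiff_subset) hBn)).1
    have hNvA : Nv = G.neighborFinset v ∩ A := by
      rw [hNv, hBdef]
      ext u
      simp only [mem_inter, mem_erase]
      constructor
      · rintro ⟨h1, _, h3⟩
        exact ⟨h1, h3⟩
      · rintro ⟨h1, h2⟩
        refine ⟨h1, ?_, h2⟩
        rintro rfl
        exact G.notMem_neighborFinset_self u h1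
    have hdN : Nv.card ≤ Δ - 1 := by rw [hNvA]; exact hd
    rcases h0.eq_or_lt with hl0 | hl0
    · have hz : lam * Zaux G (-lam) (B \ Nv) = 0 := by rw [← hl0]; ring
      have h : c * Zaux G (-lam) B < 1 * Zaux G (-lam) B :=
        mul_lt_mul_of_pos_right hc1 posB
      rw [one_mul] at h
      linarith
    rcases Nv.eq_empty_or_nonempty with hNe | hNe
    · have hBNv : Zaux G (-lam) (B \ Nv) = Zaux G (-lam) B := by
        rw [hNe, sdiff_empty]
      rw [hBNv] at hrecv
      have hc1' : c < 1 - lam := by rw [hc]; linarith [key3]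
      have h6 : c * Zaux G (-lam) B < (1 - lam) * Zaux G (-lam) B :=
        mul_lt_mul_of_pos_right hc1' posB
      have hexp : (1 - lam) * Zaux G (-lam) B
          = Zaux G (-lam) B - lam * Zaux G (-lam) B := by ring
      linarith
    · have hch := (chain B hBn v hvB Nv subset_rfl).2 hNe
      have hcd : (0:ℝ) < c ^ Nv.card := pow_pos hc0 _
      have h6 : lam / c ^ Nv.card ≤ 1/(Δ:ℝ) := by
        rw [div_le_div_iff₀ hcd hD0]
        have : c ^ (Δ - 1) ≤ c ^ Nv.card :=
          pow_le_pow_of_le_one hc0.le hc1.le hdN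
        linarith [key1]
      have h7 : lam * Zaux G (-lam) (B \ Nv) < (1/(Δ:ℝ)) * Zaux G (-lam) B := by
        calc lam * Zaux G (-lam) (B \ Nv)
            = (lam / c ^ Nv.card) * (c ^ Nv.card * Zaux G (-lam) (B \ Nv)) := by
              rw [← mul_assoc, div_mul_cancel₀ lam hcd.ne']
          _ < (lam / c ^ Nv.card) * Zaux G (-lam) B :=
              mul_lt_mul_of_pos_left hch (div_pos hl0 hcd)
          _ ≤ (1/(Δ:ℝ)) * Zaux G (-lam) B := mul_le_mul_of_nonneg_right h6 posB.le
      have hsplit : c * Zaux G (-lam) B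
          = Zaux G (-lam) B - (1/(Δ:ℝ)) * Zaux G (-lam) B := by
        rw [hc]; ring
      calc c * Zaux G (-lam) B
          = Zaux G (-lam) B - (1/(Δ:ℝ)) * Zaux G (-lam) B := hsplit
        _ < Zaux G (-lam) B - lam * Zaux G (-lam) (B \ Nv) := by linarith [h7]
        _ = Zaux G (-lam) A := hrecv.symm

/-- For a graph of maximum degree at most `Δ ≥ 2` and `0 ≤ λ ≤ (Δ-1)^{Δ-1}/Δ^Δ`,
the independence polynomial is strictly positive at `-λ`; hence it is strictly
positive on the whole interval `[-(Δ-1)^{Δ-1}/Δ^Δ, (Δ-1)^{Δ-1}/Δ^Δ]`. -/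
theorem indepPoly_pos_on_interval
    {V : Type} [Fintype V] (G : SimpleGraph V) [DecidableRel G.Adj]
    (Δ : ℕ) (hΔ : 2 ≤ Δ) (hdeg : ∀ v : V, G.degree v ≤ Δ)
    (lam : ℝ) (h0 : 0 ≤ lam)
    (hlam : lam ≤ ((Δ : ℝ) - 1) ^ (Δ - 1) / (Δ : ℝ) ^ Δ) :
    0 < indepPolyR G (-lam) := by
  have h := (Zaux_main G Δ hΔ hdeg lam h0 hlam (univ : Finset V).card univ le_rfl).1
  have heq : indepPolyR G (-lam) = Zaux G (-lam) univ := by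
    rw [indepPolyR, Zaux, powerset_univ]
  rw [heq]
  exact h
end
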